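/- arXiv:1302.6951 — 4 statements merged into one kernel-verified Lean document; each statement's English description precedes it below -/
import Mathlib

section
/- If Q and P are probability measures on a space, A is a measurable set, and Φ = log(1 + P(A)^{-1})·1_A, then the relative entropy inequality implies Q(A) ≤ (log 2 + I(Q|P)) / log(1 + P(A)^{-1}). -/
open MeasureTheory

/-- From the relative entropy inequality with `Φ = log(1 + P(A)⁻¹)·1_A` one deduces
`Q(A) ≤ (log 2 + I(Q|P)) / log(1 + P(A)⁻¹)`. -/
theorem stmt_1 {E : Type*} [MeasurableSpace E]
    (P Q : Measure E) [IsProbabilityMeasure P] [IsProbabilityMeasure Q]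
    (hac : Q ≪ P) (I : ℝ)
    (hineq : ∀ Φ : E → ℝ, Measurable Φ → (∃ C, ∀ x, |Φ x| ≤ C) →
      ∫ x, Φ x ∂Q ≤ I + Real.log (∫ x, Real.exp (Φ x) ∂P))
    (A : Set E) (hA : MeasurableSet A) (hPA : 0 < (P A).toReal) :
    (Q A).toReal ≤ (Real.log 2 + I) / Real.log (1 + ((P A).toReal)⁻¹) := by
  set p : ℝ := (P A).toReal with hp
  set c : ℝ := Real.log (1 + p⁻¹) with hc
  have hpinv : 0 < p⁻¹ := inv_pos.mpr hPA
  have hcpos : 0 < c := Real.log_pos (by linarith)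
  set Φ : E → ℝ := A.indicator (fun _ => c) with hΦ
  have hmeas : Measurable Φ := measurable_const.indicator hA
  have hbd : ∃ C, ∀ x, |Φ x| ≤ C := by
    refine ⟨|c|, fun x => ?_⟩
    by_cases hx : x ∈ A <;> simp [hΦ, Set.indicator_of_mem, Set.indicator_of_notMem, hx, abs_nonneg]
  have key := hineq Φ hmeas hbd
  have hL : ∫ x, Φ x ∂Q = (Q A).toReal * c := by
    rw [hΦ, integral_indicator_const _ hA]; simp [mul_comm, Measure.real]
  have hexp : ∀ x, Real.exp (Φ x) = A.indicator (fun _ => Real.exp c - 1) x + 1 := by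
    intro x
    by_cases hx : x ∈ A <;>
      simp [hΦ, Set.indicator_of_mem, Set.indicator_of_notMem, hx]
  have hecR : Real.exp c = 1 + p⁻¹ := Real.exp_log (by linarith)
  have hR : ∫ x, Real.exp (Φ x) ∂P = 2 := by
    have h1 : Integrable (A.indicator (fun _ => Real.exp c - 1)) P :=
      (integrable_const _).indicator hA
    simp only [hexp]
    rw [integral_add h1 (integrable_const _), integral_indicator_const _ hA]
    simp [hecR]
    rw [measureReal_def, ← hp, mul_inv_cancel₀ (ne_of_gt hPA)]
    norm_num
  rw [hL, hR] at key
  rw [le_div_iff₀ hcpos]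
  linarith
end

section
/- Let Q minimize a function H(μ) = I(μ|P) − Γ(μ) over probability measures, where Γ is bounded on sets of finite entropy. Set B = {dQ/dP = 0}, δ = P(B), and Q_s = (Q + s·1_B·P)/(1+s·δ). Then I(Q_s|P) = (1+sδ)^{-1} ( I(Q|P) + sδ log s − (1+sδ) log(1+sδ) ); in particular I(Q_s|P) = I(Q|P) + sδ log s + O(s) as s → 0⁺. -/
open MeasureTheory
open scoped ENNReal

/-- Relative entropy of a measure. -/
noncomputable def relEnt {E : Type*} [MeasurableSpace E] (ρ P : Measure E) : ℝ :=
  ∫ x, Real.log ((ρ.rnDeriv P x).toReal) ∂ρ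

/-- For `Q ≪ P`, `B = {dQ/dP = 0}`, `δ = P(B)` and
`Q_s = (Q + s·1_B·P)/(1+sδ)`, one has
`I(Q_s|P) = (1+sδ)⁻¹ (I(Q|P) + sδ log s − (1+sδ) log(1+sδ))`. -/
theorem stmt_2 {E : Type*} [MeasurableSpace E] [TopologicalSpace E] [PolishSpace E]
    [BorelSpace E]
    (P Q : Measure E) [IsProbabilityMeasure P] [IsProbabilityMeasure Q]
    (hac : Q ≪ P)
    (hent : Integrable (fun x => Real.log ((Q.rnDeriv P x).toReal)) Q)
    (B : Set E) (hB : B = {x | Q.rnDeriv P x = 0})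
    (δ : ℝ) (hδ : δ = (P B).toReal)
    (s : ℝ) (hs : 0 < s)
    (Qs : Measure E)
    (hQs : Qs = (ENNReal.ofReal (1 + s * δ))⁻¹ • (Q + (ENNReal.ofReal s) • P.restrict B)) :
    relEnt Qs P =
      (1 + s * δ)⁻¹ * (relEnt Q P + s * δ * Real.log s
        - (1 + s * δ) * Real.log (1 + s * δ)) := by
  have hBm : MeasurableSet B := by
    rw [hB]; exact (Measure.measurable_rnDeriv Q P) (measurableSet_singleton 0)
  have hδ0 : 0 ≤ δ := hδ ▸ ENNReal.toReal_nonneg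
  have hc : (0:ℝ) < 1 + s * δ := by positivity
  set c : ℝ≥0∞ := ENNReal.ofReal (1 + s * δ) with hc_def
  have hc0 : c ≠ 0 := by simp [hc_def, hc]
  have hctop : c ≠ ∞ := ENNReal.ofReal_ne_top
  have hcinv_toReal : (c⁻¹).toReal = (1 + s * δ)⁻¹ := by
    rw [ENNReal.toReal_inv, hc_def, ENNReal.toReal_ofReal hc.le]
  -- finiteness instances
  have hfin : IsFiniteMeasure ((ENNReal.ofReal s) • P.restrict B) := by
    refine ⟨?_⟩
    rw [Measure.smul_apply, smul_eq_mul]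
    exact ENNReal.mul_lt_top ENNReal.ofReal_lt_top (measure_lt_top _ _)
  -- Q B = 0
  have hQB : Q B = 0 := by
    rw [← Measure.setLIntegral_rnDeriv hac B]
    rw [setLIntegral_congr_fun hBm (fun x hx => ?_)]
    · exact lintegral_zero
    · rw [hB] at hx; exact hx
  -- rnDeriv computation
  have hrn : Qs.rnDeriv P =ᵐ[P] fun x =>
      c⁻¹ * (Q.rnDeriv P x + ENNReal.ofReal s * B.indicator (1 : E → ℝ≥0∞) x) := by
    rw [hQs]
    have h1 := Measure.rnDeriv_smul_left_of_ne_top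
      (Q + (ENNReal.ofReal s) • P.restrict B) P (r := c⁻¹) (by simp [hc0])
    have h2 := Measure.rnDeriv_add Q ((ENNReal.ofReal s) • P.restrict B) P
    have h3 := Measure.rnDeriv_smul_left_of_ne_top (P.restrict B) P
      (r := ENNReal.ofReal s) ENNReal.ofReal_ne_top
    have h4 := Measure.rnDeriv_restrict_self P hBm
    filter_upwards [h1, h2, h3, h4] with x hx1 hx2 hx3 hx4
    simp only [Pi.smul_apply, Pi.add_apply, smul_eq_mul] at hx1 hx2 hx3 hx4 ⊢
    rw [hx1, hx2, hx3, hx4]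
  set f : E → ℝ := fun x => Real.log ((Qs.rnDeriv P x).toReal) with hf_def
  -- f on Q
  have hfQ : f =ᵐ[Q] fun x =>
      Real.log ((Q.rnDeriv P x).toReal) - Real.log (1 + s * δ) := by
    have hnB : ∀ᵐ x ∂Q, x ∉ B := by
      exact measure_eq_zero_iff_ae_notMem.mp hQB
    filter_upwards [hac.ae_le hrn, hnB, hac.ae_le (Q.rnDeriv_ne_top P)]
      with x hx hxB hxtop
    show Real.log ((Qs.rnDeriv P x).toReal) = _
    simp only [Set.indicator_of_notMem hxB, mul_zero, add_zero] at hx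
    have hne0 : Q.rnDeriv P x ≠ 0 := by
      rw [hB] at hxB; simpa using hxB
    rw [hx, ENNReal.toReal_mul, hcinv_toReal,
      Real.log_mul (by positivity) (by simp [ENNReal.toReal_ne_zero, hne0, hxtop]),
      Real.log_inv]
    ring
  -- f on P.restrict B
  have hfB : f =ᵐ[P.restrict B] fun _ =>
      Real.log s - Real.log (1 + s * δ) := by
    filter_upwards [ae_restrict_of_ae hrn, ae_restrict_mem hBm] with x hx hxB
    show Real.log ((Qs.rnDeriv P x).toReal) = _
    have h0 : Q.rnDeriv P x = 0 := by rw [hB] at hxB; exact hxB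
    simp only [Set.indicator_of_mem hxB, h0, zero_add, Pi.one_apply, mul_one] at hx
    rw [hx, ENNReal.toReal_mul, hcinv_toReal, ENNReal.toReal_ofReal hs.le,
      Real.log_mul (by positivity) (ne_of_gt hs), Real.log_inv]
    ring
  have hintQ : Integrable f Q := (hent.sub (integrable_const _)).congr hfQ.symm
  have hintB : Integrable f ((ENNReal.ofReal s) • P.restrict B) :=
    ((integrable_const _).congr hfB.symm).smul_measure ENNReal.ofReal_ne_top
  have hIQ : ∫ x, f x ∂Q = relEnt Q P - Real.log (1 + s * δ) := by
    rw [integral_congr_ae hfQ, integral_sub hent (integrable_const _),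
      integral_const]
    simp [relEnt]
  have hIB : ∫ x, f x ∂(P.restrict B) = δ * (Real.log s - Real.log (1 + s * δ)) := by
    rw [integral_congr_ae hfB, integral_const, measureReal_restrict_apply_univ, hδ]
    simp [smul_eq_mul, Measure.real]
  have : relEnt Qs P = ∫ x, f x ∂Qs := rfl
  rw [this, hQs, integral_smul_measure, integral_add_measure hintQ hintB,
    integral_smul_measure, hIQ, hIB, hcinv_toReal, ENNReal.toReal_ofReal hs.le]
  simp only [smul_eq_mul]
  ring
end

section
/- Let Q ≪ P with finite relative entropy, Φ a positive bounded measurable function with ∫ Φ dQ = 1, ψ = Φ − 1, and Q_s(Φ) = ((1 + sΦ)/(1+s))·Q for s > 0. Then I(Q_s(Φ)|P) = I(Q|P) + s ∫ ψ log(dQ/dP) dQ + O(s²) as s → 0⁺. -/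
open MeasureTheory
open scoped ENNReal NNReal

lemma mul_log_sub_bound {t : ℝ} (ht : 0 < t) :
    0 ≤ t * Real.log t - (t - 1) ∧ t * Real.log t - (t - 1) ≤ (t - 1)^2 := by
  constructor
  · have h := Real.log_le_sub_one_of_pos (show (0:ℝ) < t⁻¹ by positivity)
    rw [Real.log_inv] at h
    have h2 := mul_le_mul_of_nonneg_left h ht.le
    have h3 : t * t⁻¹ = 1 := mul_inv_cancel₀ ht.ne'
    nlinarith
  · have h := Real.log_le_sub_one_of_pos ht
    nlinarith [mul_le_mul_of_nonneg_left h ht.le]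

/-- For `Q ≪ P` with finite entropy, `Φ ≥ 0` bounded measurable with `∫ Φ dQ = 1`,
`ψ = Φ − 1` and `Q_s(Φ) = ((1+sΦ)/(1+s))·Q`, one has
`I(Q_s(Φ)|P) = I(Q|P) + s ∫ ψ log(dQ/dP) dQ + O(s²)` as `s → 0⁺`. -/
theorem stmt_3 {E : Type*} [MeasurableSpace E] [TopologicalSpace E] [PolishSpace E]
    [BorelSpace E]
    (P Q : Measure E) [IsProbabilityMeasure P] [IsProbabilityMeasure Q]
    (hac : Q ≪ P)
    (hent : Integrable (fun x => |Real.log ((Q.rnDeriv P x).toReal)|) Q)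
    (Φ : E → ℝ) (hΦmeas : Measurable Φ) (hΦpos : ∀ x, 0 ≤ Φ x)
    (Cb : ℝ) (hΦbdd : ∀ x, Φ x ≤ Cb) (hΦint : ∫ x, Φ x ∂Q = 1)
    (Qs : ℝ → Measure E)
    (hQs : ∀ s, Qs s = Q.withDensity (fun x => ENNReal.ofReal ((1 + s * Φ x) / (1 + s)))) :
    ∃ C : ℝ, ∀ s ∈ Set.Ioc (0:ℝ) 1,
      |relEnt (Qs s) P - relEnt Q P
        - s * ∫ x, (Φ x - 1) * Real.log ((Q.rnDeriv P x).toReal) ∂Q| ≤ C * s ^ 2 := by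
  have hE : Nonempty E := by
    by_contra h
    have : Q Set.univ = 0 := by
      simp [Set.univ_eq_empty_iff.mpr (not_nonempty_iff.mp h)]
    simp [measure_univ] at this
  have hCb0 : 0 ≤ Cb := le_trans (hΦpos hE.some) (hΦbdd hE.some)
  set f : E → ℝ := fun x => (Q.rnDeriv P x).toReal with hfdef
  have hfmeas : Measurable f := (Measure.measurable_rnDeriv Q P).ennreal_toReal
  have hlogmeas : Measurable fun x => Real.log (f x) := Real.measurable_log.comp hfmeas
  have hlogint : Integrable (fun x => Real.log (f x)) Q :=
    hent.mono' hlogmeas.aestronglyMeasurable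
      (Filter.Eventually.of_forall fun x => le_of_eq (Real.norm_eq_abs _))
  have hΦlogint : Integrable (fun x => Φ x * Real.log (f x)) Q := by
    refine hlogint.bdd_mul hΦmeas.aestronglyMeasurable (c := Cb) (Filter.Eventually.of_forall fun x => ?_)
    rw [Real.norm_eq_abs, abs_of_nonneg (hΦpos x)]
    exact hΦbdd x
  have hΦQint : Integrable Φ Q := by
    refine (integrable_const Cb).mono' hΦmeas.aestronglyMeasurable
      (Filter.Eventually.of_forall fun x => ?_)
    rw [Real.norm_eq_abs, abs_of_nonneg (hΦpos x)]
    exact hΦbdd x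
  set I : ℝ := ∫ x, Real.log (f x) ∂Q with hIdef
  set J : ℝ := ∫ x, Φ x * Real.log (f x) ∂Q with hJdef
  have hsub : ∫ x, (Φ x - 1) * Real.log (f x) ∂Q = J - I := by
    rw [hJdef, hIdef, ← integral_sub hΦlogint hlogint]
    congr 1; ext x; ring
  refine ⟨(1 + Cb)^2 + |J - I|, fun s hs => ?_⟩
  obtain ⟨hs0, hs1⟩ := hs
  have hs1' : (0:ℝ) < 1 + s := by linarith
  set g : E → ℝ := fun x => (1 + s * Φ x) / (1 + s) with hgdef
  have hgmeas : Measurable g := ((measurable_const.add (hΦmeas.const_mul s))).div_const _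
  have hgpos : ∀ x, 0 < g x := fun x => by
    apply div_pos <;> nlinarith [mul_nonneg hs0.le (hΦpos x)]
  have hgub : ∀ x, g x ≤ 1 + Cb := fun x => by
    rw [div_le_iff₀ hs1']
    have := hΦbdd x
    nlinarith
  have hgdev : ∀ x, |g x - 1| ≤ s * (1 + Cb) := fun x => by
    have h1 : g x - 1 = s * (Φ x - 1) / (1 + s) := by
      rw [hgdef]; field_simp; ring
    rw [h1, abs_div, abs_of_pos hs1', div_le_iff₀ hs1', abs_mul, abs_of_pos hs0]
    have h2 : |Φ x - 1| ≤ 1 + Cb := by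
      have := hΦpos x; have := hΦbdd x
      rw [abs_le]; constructor <;> nlinarith
    nlinarith [mul_le_mul_of_nonneg_left h2 hs0.le,
      mul_nonneg hs0.le (show (0:ℝ) ≤ 1 + Cb by linarith)]
  -- rnDeriv of the tilted measure
  have hrn : (Qs s).rnDeriv P =ᵐ[P]
      fun x => ENNReal.ofReal (g x) * Q.rnDeriv P x := by
    rw [hQs s]
    exact Measure.rnDeriv_withDensity_left_of_absolutelyContinuous hac
      (ENNReal.measurable_ofReal.comp hgmeas).aemeasurable
  have hrnQ : ∀ᵐ x ∂Q, ((Qs s).rnDeriv P x).toReal = g x * f x ∧ 0 < f x := by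
    have h1 : ∀ᵐ x ∂Q, ((Qs s).rnDeriv P x) = ENNReal.ofReal (g x) * Q.rnDeriv P x :=
      hac.ae_le hrn
    have h2 : ∀ᵐ x ∂Q, Q.rnDeriv P x < ⊤ := hac.ae_le (Measure.rnDeriv_lt_top Q P)
    have h3 : ∀ᵐ x ∂Q, 0 < Q.rnDeriv P x := Measure.rnDeriv_pos hac
    filter_upwards [h1, h2, h3] with x hx1 hx2 hx3
    have hfx : 0 < f x := ENNReal.toReal_pos hx3.ne' hx2.ne
    refine ⟨?_, hfx⟩
    rw [hx1, ENNReal.toReal_mul, ENNReal.toReal_ofReal (hgpos x).le]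
  -- compute relEnt (Qs s)
  have hrel : relEnt (Qs s) P = ∫ x, g x * Real.log ((Qs s).rnDeriv P x).toReal ∂Q := by
    rw [relEnt, hQs s]
    have hrw : (fun x => ENNReal.ofReal ((1 + s * Φ x) / (1 + s)))
        = fun x => ((g x).toNNReal : ℝ≥0∞) := by
      ext x; rfl
    rw [hrw, integral_withDensity_eq_integral_smul
      (f := fun x => (g x).toNNReal) (measurable_real_toNNReal.comp hgmeas)]
    congr 1; ext x
    rw [NNReal.smul_def, smul_eq_mul, Real.coe_toNNReal _ (hgpos x).le]
  have hrel2 : relEnt (Qs s) P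
      = ∫ x, (g x * Real.log (g x) - (g x - 1)) ∂Q
        + ∫ x, (g x - 1) ∂Q + ∫ x, g x * Real.log (f x) ∂Q := by
    have hglogg_int : Integrable (fun x => g x * Real.log (g x) - (g x - 1)) Q := by
      refine (integrable_const ((s * (1 + Cb))^2)).mono'
        (((hgmeas.mul (Real.measurable_log.comp hgmeas)).sub
          (hgmeas.sub measurable_const)).aestronglyMeasurable)
        (Filter.Eventually.of_forall fun x => ?_)
      obtain ⟨hl, hu⟩ := mul_log_sub_bound (hgpos x)
      rw [Real.norm_eq_abs, abs_of_nonneg hl]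
      calc g x * Real.log (g x) - (g x - 1) ≤ (g x - 1)^2 := hu
        _ ≤ (s * (1 + Cb))^2 := by
            rw [← sq_abs (g x - 1)]
            apply pow_le_pow_left₀ (abs_nonneg _) (hgdev x)
    have hg1_int : Integrable (fun x => g x - 1) Q := by
      have h := (((hΦQint.const_mul s).add (integrable_const 1))).div_const (1+s)
      refine (h.congr (Filter.Eventually.of_forall fun x => ?_)).sub (integrable_const 1)
      simp only [Pi.add_apply, hgdef]; ring
    have hglogf_int : Integrable (fun x => g x * Real.log (f x)) Q := by
      refine hlogint.bdd_mul hgmeas.aestronglyMeasurable (c := 1 + Cb) (Filter.Eventually.of_forall fun x => ?_)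
      rw [Real.norm_eq_abs, abs_of_pos (hgpos x)]
      exact hgub x
    have hBC : Integrable (fun x => (g x - 1) + g x * Real.log (f x)) Q :=
      (hg1_int.add hglogf_int).congr (Filter.Eventually.of_forall fun x => rfl)
    have hcongr : ∫ x, g x * Real.log ((Qs s).rnDeriv P x).toReal ∂Q
        = ∫ x, ((g x * Real.log (g x) - (g x - 1))
            + ((g x - 1) + g x * Real.log (f x))) ∂Q := by
      apply integral_congr_ae
      filter_upwards [hrnQ] with x ⟨hx1, hx2⟩
      rw [hx1, Real.log_mul (hgpos x).ne' hx2.ne']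
      ring
    rw [hrel, hcongr, integral_add hglogg_int hBC, integral_add hg1_int hglogf_int]
    ring
  have hgint1 : ∫ x, (g x - 1) ∂Q = 0 := by
    have : ∫ x, g x ∂Q = 1 := by
      have h1 : ∫ x, g x ∂Q = (∫ x, (1 + s * Φ x) ∂Q) / (1 + s) := by
        rw [← integral_div]
      rw [h1, integral_add (integrable_const 1) (hΦQint.const_mul s),
        integral_const, integral_const_mul, hΦint, probReal_univ]
      simp only [ENNReal.toReal_one, smul_eq_mul, one_mul, mul_one]
      rw [div_eq_one_iff_eq hs1'.ne']
    rw [integral_sub (by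
      have := (((hΦQint.const_mul s).add (integrable_const 1))).div_const (1+s)
      refine this.congr (Filter.Eventually.of_forall fun x => ?_)
      simp only [Pi.add_apply, hgdef]; ring) (integrable_const 1), this, integral_const, probReal_univ]
    simp
  have hglogf : ∫ x, g x * Real.log (f x) ∂Q = (I + s * J) / (1 + s) := by
    have h1 : ∀ x, g x * Real.log (f x)
        = (Real.log (f x) + s * (Φ x * Real.log (f x))) / (1 + s) := fun x => by
      rw [hgdef]; field_simp
    simp_rw [h1]
    rw [integral_div, integral_add hlogint (hΦlogint.const_mul s),
      integral_const_mul]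
  have hrelQ : relEnt Q P = I := rfl
  set T : ℝ := ∫ x, (g x * Real.log (g x) - (g x - 1)) ∂Q with hTdef
  have hTbound : 0 ≤ T ∧ T ≤ (s * (1 + Cb))^2 := by
    have hglogg_int : Integrable (fun x => g x * Real.log (g x) - (g x - 1)) Q := by
      refine (integrable_const ((s * (1 + Cb))^2)).mono'
        (((hgmeas.mul (Real.measurable_log.comp hgmeas)).sub
          (hgmeas.sub measurable_const)).aestronglyMeasurable)
        (Filter.Eventually.of_forall fun x => ?_)
      obtain ⟨hl, hu⟩ := mul_log_sub_bound (hgpos x)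
      rw [Real.norm_eq_abs, abs_of_nonneg hl]
      calc g x * Real.log (g x) - (g x - 1) ≤ (g x - 1)^2 := hu
        _ ≤ (s * (1 + Cb))^2 := by
            rw [← sq_abs (g x - 1)]
            apply pow_le_pow_left₀ (abs_nonneg _) (hgdev x)
    constructor
    · exact integral_nonneg fun x => (mul_log_sub_bound (hgpos x)).1
    · calc T ≤ ∫ _x, (s * (1 + Cb))^2 ∂Q := by
            refine integral_mono hglogg_int (integrable_const _) fun x => ?_
            calc g x * Real.log (g x) - (g x - 1) ≤ (g x - 1)^2 :=
                  (mul_log_sub_bound (hgpos x)).2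
              _ ≤ (s * (1 + Cb))^2 := by
                  rw [← sq_abs (g x - 1)]
                  apply pow_le_pow_left₀ (abs_nonneg _) (hgdev x)
        _ = (s * (1 + Cb))^2 := by rw [integral_const, probReal_univ]; simp
  have hX : relEnt (Qs s) P - relEnt Q P - s * ∫ x, (Φ x - 1) * Real.log (f x) ∂Q
      = T - s^2 * (J - I) / (1 + s) := by
    rw [hrel2, hgint1, hglogf, hrelQ, hsub]
    field_simp
    ring
  rw [hX]
  have h1 : |T - s^2 * (J - I) / (1 + s)| ≤ T + s^2 * |J - I| / (1 + s) := by
    refine (abs_sub _ _).trans ?_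
    rw [abs_of_nonneg hTbound.1]
    gcongr
    rw [abs_div, abs_of_pos hs1', abs_mul, abs_of_nonneg (sq_nonneg s)]
  refine h1.trans ?_
  have h2 : T ≤ (1 + Cb)^2 * s^2 := by
    refine hTbound.2.trans (le_of_eq ?_); ring
  have h3 : s^2 * |J - I| / (1 + s) ≤ |J - I| * s^2 := by
    rw [div_le_iff₀ hs1']
    nlinarith [mul_nonneg (mul_nonneg (sq_nonneg s) hs0.le) (abs_nonneg (J - I))]
  nlinarith [h2, h3, sq_nonneg s, abs_nonneg (J - I)]
end

section
/- Let μ ≪ P be probability measures and F_μ(x) = log E_γ[exp(∫₀ᵀ (G_t + m(t)) dW_t(x) − ½ ∫₀ᵀ (G_t + m(t))² dt)], where under the auxiliary measure γ, G is a process independent of x, and W is a P-Brownian motion. Then ∫ F_μ dμ ≤ I(μ|P): applying the entropy inequality with a = 1 and Jensen plus Fubini to compute ∫ exp(F_μ) dP = E_γ[∫ exp(∫(G+m)dW − ½∫(G+m)²dt) dP] = 1. -/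
open MeasureTheory

/-- If `F(x) = log E_γ[exp Y(x,·)]` where for `γ`-a.e. `ω` the function
`x ↦ exp Y(x,ω)` integrates to `1` under `P` (exponential martingale property), then for
any probability measure `μ ≪ P` with finite entropy, `Γ(μ) = ∫ F dμ ≤ I(μ|P)`. -/
theorem stmt_10 {E Ω' : Type*} [MeasurableSpace E] [MeasurableSpace Ω']
    (P : Measure E) (γ : Measure Ω') [IsProbabilityMeasure P] [IsProbabilityMeasure γ]
    [SigmaFinite γ]
    (μ : Measure E) [IsProbabilityMeasure μ] (hac : μ ≪ P)
    (hent : Integrable (fun x => Real.log ((μ.rnDeriv P x).toReal)) μ)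
    (Y : E × Ω' → ℝ) (hYmeas : Measurable Y)
    (hYint : Integrable (fun p => Real.exp (Y p)) (P.prod γ))
    (hmart : ∀ᵐ ω ∂γ, ∫ x, Real.exp (Y (x, ω)) ∂P = 1)
    (F : E → ℝ) (hF : ∀ x, F x = Real.log (∫ ω, Real.exp (Y (x, ω)) ∂γ))
    (hFint : Integrable F μ) :
    ∫ x, F x ∂μ ≤ ∫ x, Real.log ((μ.rnDeriv P x).toReal) ∂μ := by
  -- the inner expectation
  set g : E → ℝ := fun x => ∫ ω, Real.exp (Y (x, ω)) ∂γ with hg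
  have hgmeas : StronglyMeasurable g :=
    (hYmeas.exp).stronglyMeasurable.integral_prod_right'
  have hgint : Integrable g P := hYint.integral_prod_left
  have hgnonneg : ∀ x, 0 ≤ g x := fun x =>
    integral_nonneg fun ω => (Real.exp_pos _).le
  -- `∫ g dP = 1` by Fubini and the martingale property
  have hg1 : ∫ x, g x ∂P = 1 := by
    have hswap : ∫ x, ∫ ω, Real.exp (Y (x, ω)) ∂γ ∂P
        = ∫ ω, ∫ x, Real.exp (Y (x, ω)) ∂P ∂γ :=
      integral_integral_swap (f := fun x ω => Real.exp (Y (x, ω))) hYint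
    rw [hg]
    rw [hswap, integral_congr_ae hmart]
    simp
  -- `g > 0` a.e. `P`, hence `exp (F x) = g x` a.e. `P`
  have hgpos : ∀ᵐ x ∂P, 0 < g x := by
    filter_upwards [hYint.prod_right_ae] with x hx
    exact integral_exp_pos (f := fun ω => Y (x, ω)) hx
  have heF : ∀ᵐ x ∂P, Real.exp (F x) = g x := by
    filter_upwards [hgpos] with x hx
    rw [hF x, Real.exp_log hx]
  -- densities
  set ρ : E → ℝ := fun x => (μ.rnDeriv P x).toReal with hρ
  have hρpos : ∀ᵐ x ∂μ, 0 < μ.rnDeriv P x := Measure.rnDeriv_pos hac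
  have hρlt : ∀ᵐ x ∂μ, μ.rnDeriv P x < ⊤ :=
    hac.ae_le (Measure.rnDeriv_lt_top μ P)
  have hρltP : ∀ᵐ x ∂P, μ.rnDeriv P x < ⊤ := Measure.rnDeriv_lt_top μ P
  -- the auxiliary function h = g / ρ
  set h : E → ℝ := fun x => g x / ρ x with hh
  have hhmeas : Measurable h :=
    hgmeas.measurable.div ((Measure.measurable_rnDeriv μ P).ennreal_toReal)
  have hhnonneg : ∀ x, 0 ≤ h x := fun x => div_nonneg (hgnonneg x) ENNReal.toReal_nonneg
  -- key lintegral bound: ∫⁻ ofReal h dμ ≤ 1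
  have hlkey : ∫⁻ x, ENNReal.ofReal (h x) ∂μ ≤ 1 := by
    rw [← lintegral_rnDeriv_mul hac
      (f := fun x => ENNReal.ofReal (h x))
      (ENNReal.measurable_ofReal.comp hhmeas).aemeasurable]
    have hle : ∀ᵐ x ∂P, μ.rnDeriv P x * ENNReal.ofReal (h x) ≤ ENNReal.ofReal (g x) := by
      filter_upwards [hρltP] with x hx
      rcases eq_or_lt_of_le (zero_le : 0 ≤ μ.rnDeriv P x) with h0 | h0
      · rw [← h0, zero_mul]; exact zero_le
      · have hρx : 0 < ρ x := ENNReal.toReal_pos h0.ne' hx.ne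
        have : μ.rnDeriv P x = ENNReal.ofReal (ρ x) := by
          rw [hρ, ENNReal.ofReal_toReal hx.ne]
        rw [this, ← ENNReal.ofReal_mul hρx.le, hh]
        rw [mul_div_cancel₀ _ hρx.ne']
    calc ∫⁻ x, μ.rnDeriv P x * ENNReal.ofReal (h x) ∂P
        ≤ ∫⁻ x, ENNReal.ofReal (g x) ∂P := lintegral_mono_ae hle
      _ = ENNReal.ofReal (∫ x, g x ∂P) :=
          (ofReal_integral_eq_lintegral_ofReal hgint
            (Filter.Eventually.of_forall hgnonneg)).symm
      _ = 1 := by rw [hg1]; simp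
  -- h is integrable w.r.t. μ with ∫ h dμ ≤ 1
  have hhint : Integrable h μ := by
    refine ⟨hhmeas.aestronglyMeasurable, ?_⟩
    rw [hasFiniteIntegral_iff_ofReal (Filter.Eventually.of_forall hhnonneg)]
    exact lt_of_le_of_lt hlkey ENNReal.one_lt_top
  have hhint1 : ∫ x, h x ∂μ ≤ 1 := by
    rw [integral_eq_lintegral_of_nonneg_ae (Filter.Eventually.of_forall hhnonneg)
      hhmeas.aestronglyMeasurable]
    calc (∫⁻ x, ENNReal.ofReal (h x) ∂μ).toReal ≤ (1 : ENNReal).toReal :=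
          ENNReal.toReal_mono ENNReal.one_ne_top hlkey
      _ = 1 := by simp
  -- pointwise: F - log ρ ≤ h - 1   μ-a.e.
  have hptwise : ∀ᵐ x ∂μ, F x - Real.log (ρ x) ≤ h x - 1 := by
    filter_upwards [hρpos, hρlt, hac.ae_le heF] with x h1 h2 h3
    have hρx : 0 < ρ x := ENNReal.toReal_pos h1.ne' h2.ne
    have hgx : 0 < g x := h3 ▸ Real.exp_pos (F x)
    have hhx : 0 < h x := div_pos hgx hρx
    have hlog : Real.log (h x) = F x - Real.log (ρ x) := by
      rw [hh, Real.log_div hgx.ne' hρx.ne', ← h3, Real.log_exp]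
    have := Real.log_le_sub_one_of_pos hhx
    linarith [hlog ▸ this]
  -- conclude
  have hsub : ∫ x, (F x - Real.log (ρ x)) ∂μ ≤ ∫ x, (h x - 1) ∂μ :=
    integral_mono_ae (hFint.sub hent) (hhint.sub (integrable_const 1)) hptwise
  rw [integral_sub hFint hent] at hsub
  rw [integral_sub hhint (integrable_const 1)] at hsub
  simp only [integral_const, probReal_univ, ENNReal.toReal_one, smul_eq_mul, one_mul] at hsub
  linarith
end
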